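/- If (gₙ) is a sequence of quasi-asymptotically almost periodic functions converging uniformly to g : I → X, then g is quasi-asymptotically almost periodic. -/

import Mathlib

open Set Filter MeasureTheory

def IsQAAP {X : Type*} [NormedAddCommGroup X] (I : Set ℝ) (f : ℝ → X) : Prop :=
  ContinuousOn f I ∧ (∃ C, ∀ t ∈ I, ‖f t‖ ≤ C) ∧
  ∀ ε > (0:ℝ), ∃ L > (0:ℝ), ∀ a : ℝ, Set.Icc a (a + L) ⊆ I →
    ∃ τ ∈ Set.Icc a (a + L), ∃ M > (0:ℝ),
      ∀ t ∈ I, M ≤ |t| → ‖f (t + τ) - f t‖ ≤ ε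

def IsAAP {X : Type*} [NormedAddCommGroup X] (I : Set ℝ) (f : ℝ → X) : Prop :=
  ContinuousOn f I ∧ (∃ C, ∀ t ∈ I, ‖f t‖ ≤ C) ∧
  ∀ ε > (0:ℝ), ∃ l > (0:ℝ), ∃ M > (0:ℝ), ∀ a : ℝ, Set.Icc a (a + l) ⊆ I →
    ∃ τ ∈ Set.Icc a (a + l),
      ∀ t ∈ I, M ≤ |t| → M ≤ |t + τ| → ‖f (t + τ) - f t‖ ≤ ε
/-- A uniform limit of quasi-asymptotically almost periodic functions is
quasi-asymptotically almost periodic. -/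
theorem isQAAP_of_tendstoUniformly {X : Type*} [NormedAddCommGroup X]
    (I : Set ℝ) (hI : I = Set.univ ∨ I = Set.Ici 0)
    (g : ℕ → ℝ → X) (glim : ℝ → X)
    (hg : ∀ n, IsQAAP I (g n))
    (hconv : TendstoUniformlyOn g glim atTop I) :
    IsQAAP I glim := by
  have hmem : ∀ t ∈ I, ∀ τ ∈ I, t + τ ∈ I := by
    rcases hI with h | h <;> subst h <;> intro t ht τ hτ
    · trivial
    · exact add_nonneg (Set.mem_Ici.mp ht) (Set.mem_Ici.mp hτ)
  have hcont : ContinuousOn glim I :=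
    hconv.continuousOn (Eventually.of_forall fun n => (hg n).1).frequently
  refine ⟨hcont, ?_, ?_⟩
  · have h1 := (Metric.tendstoUniformlyOn_iff.mp hconv 1 one_pos).exists
    obtain ⟨n, hn⟩ := h1
    obtain ⟨C, hC⟩ := (hg n).2.1
    refine ⟨C + 1, fun t ht => ?_⟩
    have := hn t ht
    rw [dist_eq_norm] at this
    have h2 : ‖glim t‖ - ‖g n t‖ ≤ ‖glim t - g n t‖ := norm_sub_norm_le _ _
    linarith [hC t ht]
  · intro ε hε
    obtain ⟨n, hn⟩ := (Metric.tendstoUniformlyOn_iff.mp hconv (ε/3) (by linarith)).exists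
    obtain ⟨L, hL, hLe⟩ := (hg n).2.2 (ε/3) (by linarith)
    refine ⟨L, hL, fun a ha => ?_⟩
    obtain ⟨τ, hτ, M, hM, hMτ⟩ := hLe a ha
    refine ⟨τ, hτ, M, hM, fun t ht hMt => ?_⟩
    have hτI : τ ∈ I := ha hτ
    have htτ : t + τ ∈ I := hmem t ht τ hτI
    have h1 := hn t ht
    have h2 := hn (t + τ) htτ
    rw [dist_eq_norm] at h1 h2
    have key := hMτ t ht hMt
    calc ‖glim (t + τ) - glim t‖
        = ‖(glim (t+τ) - g n (t+τ)) + (g n (t+τ) - g n t) + (g n t - glim t)‖ := by congr 1; abel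
      _ ≤ ‖(glim (t+τ) - g n (t+τ)) + (g n (t+τ) - g n t)‖ + ‖g n t - glim t‖ := norm_add_le _ _
      _ ≤ ‖glim (t+τ) - g n (t+τ)‖ + ‖g n (t+τ) - g n t‖ + ‖g n t - glim t‖ := by
          linarith [norm_add_le (glim (t+τ) - g n (t+τ)) (g n (t+τ) - g n t)]
      _ ≤ ε := by
          rw [norm_sub_rev (glim (t+τ))] at h2 ⊢
          rw [norm_sub_rev (g n t)]
          linarith
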